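/- If r : [0, ∞) → (0, ∞) is differentiable and satisfies r' = −c r³ + O(r⁵) as r → 0 in the sense that |r'(t) + c r(t)³| ≤ K r(t)⁵ for all t, with c > 0, K ≥ 0, and r(t) → 0 as t → ∞, then lim_{t→∞} t·r(t)² = 1/(2c). -/

import Mathlib

open Real Filter

/-- If r > 0 is differentiable with |r' + c r³| ≤ K r⁵, c > 0, K ≥ 0, and r → 0,
    then t · r(t)² → 1/(2c). -/
theorem cubic_leading_term_power_law (c K : ℝ) (hc : 0 < c) (hK : 0 ≤ K)
    (r : ℝ → ℝ) (hpos : ∀ t : ℝ, 0 ≤ t → 0 < r t)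
    (hdiff : ∀ t : ℝ, 0 ≤ t → DifferentiableAt ℝ r t)
    (hbound : ∀ t : ℝ, 0 ≤ t → |deriv r t + c * r t ^ 3| ≤ K * r t ^ 5)
    (hlim : Tendsto r atTop (nhds 0)) :
    Tendsto (fun t : ℝ => t * r t ^ 2) atTop (nhds (1 / (2 * c))) := by
  set u : ℝ → ℝ := fun t => (r t ^ 2)⁻¹ with hu
  set D : ℝ → ℝ := fun t => -(2 * r t * deriv r t) / (r t ^ 2) ^ 2 with hD
  have hder : ∀ t : ℝ, 0 ≤ t → HasDerivAt u (D t) t := by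
    intro t ht
    have hr := hpos t ht
    have h1 : HasDerivAt (fun s => r s ^ 2) (2 * r t * deriv r t) t := by
      have := ((hdiff t ht).hasDerivAt).pow 2
      exact this.congr_deriv (by simp)
    have h2 := h1.inv (by positivity)
    exact h2
  have hDbnd : ∀ t : ℝ, 0 ≤ t → |D t - 2 * c| ≤ 2 * K * r t ^ 2 := by
    intro t ht
    have hr := hpos t ht
    have hr3 : (0:ℝ) < r t ^ 3 := by positivity
    have hDeq : D t - 2 * c = (-2) * (deriv r t + c * r t ^ 3) / r t ^ 3 := by
      rw [hD]; field_simp; ring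
    rw [hDeq, abs_div, abs_of_pos hr3, abs_mul, div_le_iff₀ hr3]
    have : |(-2 : ℝ)| = 2 := by norm_num
    rw [this]
    calc 2 * |deriv r t + c * r t ^ 3| ≤ 2 * (K * r t ^ 5) := by
          linarith [hbound t ht]
      _ = 2 * K * r t ^ 2 * r t ^ 3 := by ring
  -- main limit
  have key : Tendsto (fun t => u t / t) atTop (nhds (2 * c)) := by
    rw [Metric.tendsto_atTop]
    intro ε hε
    have h2 : Tendsto (fun t => 2 * K * r t ^ 2) atTop (nhds 0) := by
      have := (hlim.pow 2).const_mul (2 * K)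
      simpa using this
    obtain ⟨T₀, hT₀⟩ := (Metric.tendsto_atTop.1 h2 (ε / 2) (by linarith)).imp (fun T h => h)
    set T : ℝ := max T₀ 1 with hT
    have hT1 : (1:ℝ) ≤ T := le_max_right _ _
    have hT0 : (0:ℝ) ≤ T := by linarith
    have hderbnd : ∀ s ∈ Set.Ici T, |D s - 2 * c| ≤ ε / 2 := by
      intro s hs
      have hs0 : (0:ℝ) ≤ s := le_trans hT0 hs
      have := hT₀ s (le_trans (le_max_left _ _) hs)
      rw [Real.dist_eq, sub_zero] at this
      have h2Kr : 2 * K * r s ^ 2 ≤ ε / 2 := by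
        have := this.le
        calc 2 * K * r s ^ 2 ≤ |2 * K * r s ^ 2| := le_abs_self _
          _ ≤ ε / 2 := this
      linarith [hDbnd s hs0]
    -- MVT estimate on [T, ∞)
    set g : ℝ → ℝ := fun t => u t - 2 * c * t with hg
    have hgd : ∀ x ∈ Set.Ici T, HasDerivWithinAt g (D x - 2 * c) (Set.Ici T) x := by
      intro x hx
      have hx0 : (0:ℝ) ≤ x := le_trans hT0 hx
      exact ((hder x hx0).sub ((hasDerivAt_id x).const_mul (2 * c))).hasDerivWithinAt.congr_deriv
        (by ring)
    have hmvt : ∀ t : ℝ, t ∈ Set.Ici T → |g t - g T| ≤ ε / 2 * |t - T| := by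
      intro t ht
      have := Convex.norm_image_sub_le_of_norm_hasDerivWithin_le hgd
        (fun x hx => by simpa using hderbnd x hx) (convex_Ici T) (Set.self_mem_Ici) ht
      simpa [Real.norm_eq_abs] using this
    set N : ℝ := max T (2 * |g T| / ε + 1) with hN
    refine ⟨N, fun t htN => ?_⟩
    have htT : T ≤ t := le_trans (le_max_left _ _) htN
    have ht1 : (1:ℝ) ≤ t := le_trans hT1 htT
    have htpos : (0:ℝ) < t := by linarith
    have htB : 2 * |g T| / ε + 1 ≤ t := le_trans (le_max_right _ _) htN
    have hest := hmvt t htT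
    rw [abs_sub_comm] at hest
    have habs : |t - T| = t - T := abs_of_nonneg (by linarith)
    rw [habs] at hest
    -- |g t| ≤ |g T| + ε/2 * (t - T)
    have hgt : |g t| ≤ |g T| + ε / 2 * (t - T) := by
      have := abs_sub_abs_le_abs_sub (g T) (g t)
      have h' := abs_sub_abs_le_abs_sub (g t) (g T)
      rw [abs_sub_comm] at hest
      linarith [abs_sub_abs_le_abs_sub (g t) (g T), hest]
    have hdiv : |u t / t - 2 * c| = |g t| / t := by
      have heq : u t / t - 2 * c = g t / t := by
        rw [hg]; field_simp
      rw [heq, abs_div, abs_of_pos htpos]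
    rw [Real.dist_eq, hdiv]
    have hgTt : |g T| < ε / 2 * t := by
      rw [← div_lt_iff₀ htpos]
      have h2gT : 2 * |g T| / ε < t := by linarith
      rw [div_lt_iff₀ hε] at h2gT
      rw [div_lt_iff₀ htpos]
      nlinarith
    have hnum : |g T| + ε / 2 * (t - T) < ε * t := by nlinarith
    calc |g t| / t ≤ (|g T| + ε / 2 * (t - T)) / t := by gcongr
      _ < ε := by rw [div_lt_iff₀ htpos]; linarith
  -- conclude
  have h2c : (2 * c) ≠ 0 := by positivity
  have hinv : Tendsto (fun t => (u t / t)⁻¹) atTop (nhds (2 * c)⁻¹) := key.inv₀ h2c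
  rw [show (1 / (2 * c)) = (2 * c)⁻¹ by ring]
  refine Tendsto.congr' ?_ hinv
  filter_upwards [eventually_ge_atTop (1:ℝ)] with t ht
  have hr := hpos t (by linarith)
  have htpos : (0:ℝ) < t := by linarith
  rw [hu]
  rw [inv_div]; field_simp
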